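/- For every finite group G, with n = |G| the order of G, one has n·C(G) ⊆ Φ(A(G)) ⊆ C(G), where Φ: A(G) → C(G) is the ghost map; in particular the cokernel of Φ is a finite abelian group. -/

import Mathlib

open MulAction Pointwise TensorProduct

universe u v


/-- A finite `G`-set: a finite type with a `G`-action. -/
structure FinGSet (G : Type) [Group G] : Type 1 where
  carrier : Type
  [fintype : Fintype carrier]
  [mulAction : MulAction G carrier]

attribute [instance] FinGSet.fintype FinGSet.mulAction

namespace FinGSet

variable {G : Type} [Group G]

instance sumAction (α β : Type) [MulAction G α] [MulAction G β] : MulAction G (α ⊕ β) where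
  smul g := Sum.map (g • ·) (g • ·)
  one_smul x := by cases x <;> simp [Sum.map, one_smul]
  mul_smul g h x := by cases x <;> simp [Sum.map, mul_smul]

/-- Disjoint union of finite `G`-sets. -/
def sum (S T : FinGSet G) : FinGSet G := ⟨S.carrier ⊕ T.carrier⟩

/-- Cartesian product of finite `G`-sets, with the diagonal action. -/
def prod (S T : FinGSet G) : FinGSet G := ⟨S.carrier × T.carrier⟩

/-- The one-point `G`-set. -/
def pt (G : Type) [Group G] : FinGSet G := ⟨PUnit⟩

/-- Equivariant bijection between two finite `G`-sets. -/
def Iso (S T : FinGSet G) : Prop :=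
  ∃ e : S.carrier ≃ T.carrier, ∀ (g : G) (x : S.carrier), e (g • x) = g • e x

end FinGSet

/-- The defining relations of the Burnside ring as a quotient of the free commutative
ring on the finite `G`-sets: addition is disjoint union, multiplication is
cartesian product, the one-point set is the unit, and isomorphic `G`-sets are equal. -/
def burnsideRels (G : Type) [Group G] : Set (FreeCommRing (FinGSet G)) :=
  {x | (∃ S T : FinGSet G, x =
          FreeCommRing.of (S.sum T) - FreeCommRing.of S - FreeCommRing.of T) ∨
       (∃ S T : FinGSet G, x =
          FreeCommRing.of (S.prod T) - FreeCommRing.of S * FreeCommRing.of T) ∨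
       (x = FreeCommRing.of (FinGSet.pt G) - 1) ∨
       (∃ S T : FinGSet G, S.Iso T ∧ x = FreeCommRing.of S - FreeCommRing.of T)}

/-- The Burnside ring of a group `G`: the Grothendieck ring of the semiring of
isomorphism classes of finite `G`-sets. -/
def BurnsideRing (G : Type) [Group G] : Type 1 :=
  FreeCommRing (FinGSet G) ⧸ Ideal.span (burnsideRels G)

noncomputable instance (G : Type) [Group G] : CommRing (BurnsideRing G) :=
  Ideal.Quotient.commRing _

/-- The class of a finite `G`-set in the Burnside ring. -/
noncomputable def BurnsideRing.mk {G : Type} [Group G] (S : FinGSet G) : BurnsideRing G :=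
  Ideal.Quotient.mk _ (FreeCommRing.of S)

/-- The conjugacy classes of subgroups of `G`. -/
def SubgroupConjClasses (G : Type) [Group G] : Type :=
  Quotient (MulAction.orbitRel (ConjAct G) (Subgroup G))

/-- The ghost ring of `G`: integer-valued functions on the conjugacy classes of
subgroups of `G`, with pointwise operations. -/
def GhostRing (G : Type) [Group G] : Type :=
  SubgroupConjClasses G → ℤ

instance (G : Type) [Group G] : CommRing (GhostRing G) := Pi.commRing

/-- The conjugacy class of a subgroup. -/
def SubgroupConjClasses.mk {G : Type} [Group G] (H : Subgroup G) : SubgroupConjClasses G :=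
  Quotient.mk (MulAction.orbitRel (ConjAct G) (Subgroup G)) H

/-- The table of marks of a finite `G`-set, as an element of the ghost ring:
the function whose value at the conjugacy class of a subgroup `H ≤ G` is the number
of `H`-fixed points. -/
def HasMarksOf {G : Type} [Group G] (f : GhostRing G) (S : FinGSet G) : Prop :=
  ∀ H : Subgroup G, f (SubgroupConjClasses.mk H) =
    Nat.card (MulAction.fixedPoints H S.carrier)

/-- The Burnside ring, identified with its image in the ghost ring under the
(injective) ghost map: the subring generated by the marks of finite `G`-sets. -/
def burnsideSubring (G : Type) [Group G] : Subring (GhostRing G) :=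
  Subring.closure {f : GhostRing G | ∃ S : FinGSet G, HasMarksOf f S}

variable {G : Type} [Group G]

section fpequiv
variable {S T : Type} [MulAction G S] [MulAction G T] (H : Subgroup G)

lemma mem_fp_iff {H : Subgroup G} {x : S} : x ∈ fixedPoints H S ↔ ∀ h ∈ H, h • x = x :=
  ⟨fun hx h hh => hx ⟨h, hh⟩, fun hx h => hx h h.2⟩

lemma mem_conjAct_smul_iff {g : G} {H : Subgroup G} {k : G} :
    k ∈ ConjAct.toConjAct g • H ↔ g⁻¹ * k * g ∈ H := by
  rw [Subgroup.mem_pointwise_smul_iff_inv_smul_mem, ConjAct.smul_def]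
  simp [mul_assoc]

def fpSumEquiv : ↥(fixedPoints H (S ⊕ T)) ≃ ↥(fixedPoints H S) ⊕ ↥(fixedPoints H T) where
  toFun := fun ⟨x, hx⟩ =>
    match x, hx with
    | Sum.inl a, hx => Sum.inl ⟨a, fun h => Sum.inl.inj (hx h)⟩
    | Sum.inr b, hx => Sum.inr ⟨b, fun h => Sum.inr.inj (hx h)⟩
  invFun := fun x =>
    match x with
    | Sum.inl ⟨a, ha⟩ => ⟨Sum.inl a, fun h => congrArg Sum.inl (ha h)⟩
    | Sum.inr ⟨b, hb⟩ => ⟨Sum.inr b, fun h => congrArg Sum.inr (hb h)⟩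
  left_inv := fun ⟨x, hx⟩ => by cases x <;> rfl
  right_inv := fun x => by rcases x with ⟨a, ha⟩ | ⟨b, hb⟩ <;> rfl

def fpProdEquiv : ↥(fixedPoints H (S × T)) ≃ ↥(fixedPoints H S) × ↥(fixedPoints H T) where
  toFun := fun ⟨⟨a, b⟩, hx⟩ =>
    (⟨a, fun h => congrArg Prod.fst (hx h)⟩, ⟨b, fun h => congrArg Prod.snd (hx h)⟩)
  invFun := fun ⟨⟨a, ha⟩, ⟨b, hb⟩⟩ => ⟨(a, b), fun h => Prod.ext (ha h) (hb h)⟩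
  left_inv := fun ⟨⟨a, b⟩, hx⟩ => rfl
  right_inv := fun ⟨⟨a, ha⟩, ⟨b, hb⟩⟩ => rfl

def fpIsoEquiv (e : S ≃ T) (he : ∀ (g : G) (x : S), e (g • x) = g • e x) :
    ↥(fixedPoints H S) ≃ ↥(fixedPoints H T) where
  toFun := fun ⟨x, hx⟩ => ⟨e x, fun h => by
    have : e ((h : G) • x) = (h : G) • e x := he _ x
    rw [show ((h : G) • x) = x from hx h] at this
    exact this.symm⟩
  invFun := fun ⟨y, hy⟩ => ⟨e.symm y, fun h => by
    apply e.injective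
    show e ((h : G) • e.symm y) = e (e.symm y)
    rw [he (h : G) (e.symm y), e.apply_symm_apply]
    exact hy h⟩
  left_inv := fun ⟨x, hx⟩ => Subtype.ext (e.symm_apply_apply x)
  right_inv := fun ⟨y, hy⟩ => Subtype.ext (e.apply_symm_apply y)

def fpConjEquiv (g : G) : ↥(fixedPoints H S) ≃ ↥(fixedPoints (↥(ConjAct.toConjAct g • H)) S) where
  toFun := fun ⟨x, hx⟩ => ⟨g • x, mem_fp_iff.2 fun k hk => by
    have hk' : g⁻¹ * k * g ∈ H := mem_conjAct_smul_iff.1 hk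
    have : k • g • x = g • (g⁻¹ * k * g) • x := by
      rw [← mul_smul, ← mul_smul]; congr 1; group
    rw [this, mem_fp_iff.1 hx _ hk']⟩
  invFun := fun ⟨y, hy⟩ => ⟨g⁻¹ • y, mem_fp_iff.2 fun h hh => by
    have hm : g * h * g⁻¹ ∈ ConjAct.toConjAct g • H := by
      rw [mem_conjAct_smul_iff]
      convert hh using 2; group
    have h2 : (g * h * g⁻¹) • y = y := mem_fp_iff.1 hy _ hm
    have : h • g⁻¹ • y = g⁻¹ • (g * h * g⁻¹) • y := by
      rw [← mul_smul, ← mul_smul]; congr 1; group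
    rw [this, h2]⟩
  left_inv := fun ⟨x, hx⟩ => Subtype.ext (inv_smul_smul g x)
  right_inv := fun ⟨y, hy⟩ => Subtype.ext (smul_inv_smul g y)

lemma fpPtCard : Nat.card ↥(fixedPoints H PUnit) = 1 := by
  have : Nonempty ↥(fixedPoints H PUnit) := ⟨⟨PUnit.unit, fun h => rfl⟩⟩
  exact Nat.card_unique

end fpequiv
section markdef
variable {G : Type} [Group G]

/-- The mark homomorphism on objects. -/
noncomputable def markFn (S : FinGSet G) : GhostRing G :=
  Quotient.lift (fun H : Subgroup G => (Nat.card ↥(fixedPoints H S.carrier) : ℤ))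
    (by
      rintro K H ⟨g, rfl⟩
      dsimp only
      congr 1
      have := Nat.card_congr (fpConjEquiv (S := S.carrier) H (ConjAct.ofConjAct g))
      rw [ConjAct.toConjAct_ofConjAct] at this
      exact this.symm)

lemma markFn_mk (S : FinGSet G) (H : Subgroup G) :
    markFn S (SubgroupConjClasses.mk H) = (Nat.card ↥(fixedPoints H S.carrier) : ℤ) := rfl

lemma markFn_hasMarks (S : FinGSet G) : HasMarksOf (markFn S) S := fun H => markFn_mk S H

lemma markFn_sum (S T : FinGSet G) : markFn (S.sum T) = markFn S + markFn T := by
  funext c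
  induction c using Quotient.ind with
  | _ H =>
    show markFn (S.sum T) (SubgroupConjClasses.mk H)
      = markFn S (SubgroupConjClasses.mk H) + markFn T (SubgroupConjClasses.mk H)
    rw [markFn_mk, markFn_mk, markFn_mk]
    norm_cast
    exact (Nat.card_congr (fpSumEquiv H)).trans (Nat.card_sum ..)

lemma markFn_prod (S T : FinGSet G) : markFn (S.prod T) = markFn S * markFn T := by
  funext c
  induction c using Quotient.ind with
  | _ H =>
    show markFn (S.prod T) (SubgroupConjClasses.mk H)
      = markFn S (SubgroupConjClasses.mk H) * markFn T (SubgroupConjClasses.mk H)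
    rw [markFn_mk, markFn_mk, markFn_mk]
    norm_cast
    exact (Nat.card_congr (fpProdEquiv H)).trans (Nat.card_prod ..)

lemma markFn_pt : markFn (FinGSet.pt G) = 1 := by
  funext c
  induction c using Quotient.ind with
  | _ H =>
    show markFn (FinGSet.pt G) (SubgroupConjClasses.mk H) = 1
    rw [markFn_mk]
    norm_cast
    exact fpPtCard H

lemma markFn_iso {S T : FinGSet G} (h : S.Iso T) : markFn S = markFn T := by
  obtain ⟨e, he⟩ := h
  funext c
  induction c using Quotient.ind with
  | _ H =>
    show markFn S (SubgroupConjClasses.mk H) = markFn T (SubgroupConjClasses.mk H)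
    rw [markFn_mk, markFn_mk]
    norm_cast
    exact Nat.card_congr (fpIsoEquiv H e he)

/-- The ghost map, on the free commutative ring. -/
noncomputable def preGhost (G : Type) [Group G] : FreeCommRing (FinGSet G) →+* GhostRing G :=
  FreeCommRing.lift markFn

lemma preGhost_vanish : ∀ x ∈ burnsideRels G, preGhost G x = 0 := by
  rintro x (⟨S, T, rfl⟩ | ⟨S, T, rfl⟩ | rfl | ⟨S, T, hST, rfl⟩) <;>
    simp only [preGhost, map_sub, map_mul, map_one, FreeCommRing.lift_of]
  · rw [markFn_sum]; ring
  · rw [markFn_prod]; ring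
  · rw [markFn_pt]; ring
  · rw [markFn_iso hST]; ring

/-- The ghost map. -/
noncomputable def ghost (G : Type) [Group G] : BurnsideRing G →+* GhostRing G :=
  Ideal.Quotient.lift _ (preGhost G) (fun a ha => by
    have : Ideal.span (burnsideRels G) ≤ RingHom.ker (preGhost G) := by
      rw [Ideal.span_le]
      intro x hx
      exact preGhost_vanish x hx
    exact this ha)

lemma ghost_mk (S : FinGSet G) : ghost G (BurnsideRing.mk S) = markFn S := by
  show Ideal.Quotient.lift _ (preGhost G) _ (Ideal.Quotient.mk _ (FreeCommRing.of S)) = markFn S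
  exact (Ideal.Quotient.lift_mk _ _ _).trans (FreeCommRing.lift_of _ S)

end markdef
section quotset
variable {G : Type} [Group G] [Fintype G]

/-- The coset `G`-set `G ⧸ H`. -/
noncomputable def qset (H : Subgroup G) : FinGSet G :=
  letI : Fintype (G ⧸ H) := Fintype.ofFinite _
  ⟨G ⧸ H⟩

variable (H : Subgroup G)

/-- Right translation by an element of the normalizer, on `G ⧸ H`. -/
def rtr (n : ↥(Subgroup.normalizer (H : Set G))) : G ⧸ H → G ⧸ H :=
  Quotient.map' (fun g => g * (↑n)⁻¹) (by
    intro a b hab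
    rw [QuotientGroup.leftRel_apply] at hab ⊢
    have := (Subgroup.mem_normalizer_iff.mp n.2 (a⁻¹ * b)).mp hab
    convert this using 1
    group)

lemma rtr_mk (n : ↥(Subgroup.normalizer (H : Set G))) (g : G) :
    rtr H n (QuotientGroup.mk g) = QuotientGroup.mk (g * (↑n)⁻¹) := rfl

lemma rtr_fixed (K : Subgroup G) (n : ↥(Subgroup.normalizer (H : Set G))) {x : G ⧸ H}
    (hx : x ∈ fixedPoints K (G ⧸ H)) : rtr H n x ∈ fixedPoints K (G ⧸ H) := by
  obtain ⟨g, rfl⟩ := QuotientGroup.mk_surjective x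
  intro k
  have hk : QuotientGroup.mk ((k : G) * g) = (QuotientGroup.mk g : G ⧸ H) := by
    have := hx k
    rwa [show (k • (QuotientGroup.mk g : G ⧸ H)) = QuotientGroup.mk ((k : G) * g) from rfl]
      at this
  rw [QuotientGroup.eq] at hk
  show (k : G) • rtr H n (QuotientGroup.mk g) = rtr H n (QuotientGroup.mk g)
  rw [rtr_mk, show ((k : G) • (QuotientGroup.mk (g * (↑n)⁻¹) : G ⧸ H))
      = QuotientGroup.mk ((k : G) * (g * (↑n)⁻¹)) from rfl, QuotientGroup.eq]
  have := (Subgroup.mem_normalizer_iff.mp n.2 (((k:G) * g)⁻¹ * g)).mp hk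
  convert this using 1
  group

/-- The action of the normalizer of `H` on the `K`-fixed points of `G ⧸ H`. -/
noncomputable def normAction (K : Subgroup G) :
    MulAction ↥(Subgroup.normalizer (H : Set G)) ↥(fixedPoints K (G ⧸ H)) where
  smul n x := ⟨rtr H n x.1, rtr_fixed H K n x.2⟩
  one_smul x := by
    apply Subtype.ext
    show rtr H 1 x.1 = x.1
    obtain ⟨g, hg⟩ := QuotientGroup.mk_surjective x.1
    rw [← hg, rtr_mk]
    simp
  mul_smul n m x := by
    apply Subtype.ext
    show rtr H (n * m) x.1 = rtr H n (rtr H m x.1)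
    obtain ⟨g, hg⟩ := QuotientGroup.mk_surjective x.1
    rw [← hg, rtr_mk, rtr_mk, rtr_mk]
    congr 1
    simp [mul_assoc]

lemma normAction_stabilizer (K : Subgroup G) (x : ↥(fixedPoints K (G ⧸ H))) :
    letI := normAction H K
    stabilizer ↥(Subgroup.normalizer (H : Set G)) x = H.subgroupOf (Subgroup.normalizer (H : Set G)) := by
  letI := normAction H K
  ext n
  obtain ⟨g, hg⟩ := QuotientGroup.mk_surjective x.1
  rw [mem_stabilizer_iff, Subgroup.mem_subgroupOf]
  constructor
  · intro h
    have : rtr H n x.1 = x.1 := congrArg Subtype.val h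
    rw [← hg, rtr_mk, QuotientGroup.eq] at this
    simpa using this
  · intro h
    apply Subtype.ext
    show rtr H n x.1 = x.1
    rw [← hg, rtr_mk, QuotientGroup.eq]
    simpa using h
end quotset
section counting

/-- If all stabilizers of an action equal `H'`, the cardinality of the space is the
number of orbits times the index. -/
lemma card_eq_orbits_mul_index {W X : Type*} [Group W] [MulAction W X] (H' : Subgroup W)
    (h : ∀ x : X, stabilizer W x = H') :
    Nat.card X = Nat.card (orbitRel.Quotient W X) * Nat.card (W ⧸ H') := by
  have e : X ≃ (orbitRel.Quotient W X) × (W ⧸ H') :=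
    (selfEquivSigmaOrbits W X).trans
      ((Equiv.sigmaCongrRight (fun (ω : orbitRel.Quotient W X) =>
        (orbitEquivQuotientStabilizer W ω.out).trans
          (Quotient.congrRight (fun a b => by rw [h])))).trans
        (Equiv.sigmaEquivProd ..))
  rw [Nat.card_congr e, Nat.card_prod]

variable {G : Type} [Group G] [Fintype G] (H : Subgroup G)

/-- The index of `H` in its normalizer. -/
noncomputable def nIdx : ℕ := Nat.card (↥(Subgroup.normalizer (H : Set G)) ⧸ H.subgroupOf (Subgroup.normalizer (H : Set G)))

lemma nIdx_dvd_card_fp (K : Subgroup G) :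
    nIdx H ∣ Nat.card ↥(fixedPoints K (G ⧸ H)) := by
  letI := normAction H K
  rw [card_eq_orbits_mul_index (H.subgroupOf (Subgroup.normalizer (H : Set G))) (normAction_stabilizer H K)]
  exact dvd_mul_left _ _

lemma card_fp_self : Nat.card ↥(fixedPoints H (G ⧸ H)) = nIdx H := by
  have hto : ∀ n : ↥(Subgroup.normalizer (H : Set G)), (QuotientGroup.mk (↑n : G) : G ⧸ H) ∈ fixedPoints H (G ⧸ H) := by
    intro n h
    show (h : G) • (QuotientGroup.mk (↑n : G) : G ⧸ H) = QuotientGroup.mk (↑n : G)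
    rw [show ((h : G) • (QuotientGroup.mk (↑n : G) : G ⧸ H))
        = QuotientGroup.mk ((h : G) * ↑n) from rfl, QuotientGroup.eq]
    have := (Subgroup.mem_normalizer_iff.mp ((Subgroup.normalizer (H : Set G)).inv_mem n.2) ((h : G))⁻¹).mp (H.inv_mem h.2)
    convert this using 1
    group
  let φ : (↥(Subgroup.normalizer (H : Set G)) ⧸ H.subgroupOf (Subgroup.normalizer (H : Set G))) → ↥(fixedPoints H (G ⧸ H)) :=
    Quotient.lift (fun n => ⟨QuotientGroup.mk ↑n, hto n⟩) (by
      intro a b hab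
      have hab' : ((↑a : G))⁻¹ * ↑b ∈ H :=
        Subgroup.mem_subgroupOf.mp (QuotientGroup.leftRel_apply.mp hab)
      exact Subtype.ext (QuotientGroup.eq.mpr hab'))
  have hbij : Function.Bijective φ := by
    constructor
    · intro a b hab
      induction a using Quotient.ind with
      | _ a =>
      induction b using Quotient.ind with
      | _ b =>
      apply Quotient.sound
      have : (QuotientGroup.mk (↑a : G) : G ⧸ H) = QuotientGroup.mk (↑b : G) :=
        congrArg Subtype.val hab
      rw [QuotientGroup.eq] at this
      exact QuotientGroup.leftRel_apply.mpr (Subgroup.mem_subgroupOf.mpr this)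
    · rintro ⟨x, hx⟩
      obtain ⟨g, hg⟩ := QuotientGroup.mk_surjective x
      have hmem : ∀ h ∈ H, g⁻¹ * h * g ∈ H := by
        intro h hh
        have := hx ⟨h⁻¹, H.inv_mem hh⟩
        rw [show ((⟨h⁻¹, H.inv_mem hh⟩ : H) • x) = (h⁻¹ • x) from rfl, ← hg,
          show (h⁻¹ • (QuotientGroup.mk g : G ⧸ H)) = QuotientGroup.mk (h⁻¹ * g) from rfl,
          QuotientGroup.eq] at this
        convert this using 1
        group
      have hgN : g ∈ (Subgroup.normalizer (H : Set G)) := by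
        have : g⁻¹ ∈ (Subgroup.normalizer (H : Set G)) :=
          Subgroup.mem_normalizer_fintype (fun h hh => by
            have := hmem h hh
            convert this using 1
            group
            exact Iff.rfl)
        simpa using (Subgroup.normalizer (H : Set G)).inv_mem this
      exact ⟨Quotient.mk _ ⟨g, hgN⟩, Subtype.ext hg⟩
  rw [Nat.card_congr (Equiv.ofBijective φ hbij).symm, nIdx]

lemma nIdx_pos : 0 < nIdx H := Nat.card_pos

lemma nIdx_dvd_card : nIdx H ∣ Fintype.card G := by
  have h1 : nIdx H ∣ Nat.card ↥(fixedPoints (⊥ : Subgroup G) (G ⧸ H)) := nIdx_dvd_card_fp H ⊥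
  have h2 : fixedPoints (⊥ : Subgroup G) (G ⧸ H) = Set.univ := by
    ext x
    simp only [Set.mem_univ, iff_true]
    intro h
    have : (h : G) = 1 := Subgroup.mem_bot.mp h.2
    show (h : G) • x = x
    rw [this, one_smul]
  rw [h2, Nat.card_congr (Equiv.Set.univ _)] at h1
  calc nIdx H ∣ Nat.card (G ⧸ H) := h1
    _ ∣ Fintype.card G := by
        rw [← Nat.card_eq_fintype_card, Subgroup.card_eq_card_quotient_mul_card_subgroup H]
        exact Dvd.intro _ rfl

/-- If the fixed points of `K` on `G ⧸ H` are nonempty, `K` is subconjugate to `H`. -/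
lemma subconj_of_fp_nonempty {K : Subgroup G}
    (hne : (fixedPoints K (G ⧸ H)).Nonempty) :
    ∃ g : G, ConjAct.toConjAct g • K ≤ H := by
  obtain ⟨x, hx⟩ := hne
  obtain ⟨g, hg⟩ := QuotientGroup.mk_surjective x
  refine ⟨g⁻¹, fun y hy => ?_⟩
  rw [mem_conjAct_smul_iff] at hy
  simp only [inv_inv] at hy
  -- hy : g * y * g⁻¹ ∈ K
  have := hx ⟨(g * y * g⁻¹)⁻¹, K.inv_mem hy⟩
  rw [show ((⟨(g * y * g⁻¹)⁻¹, K.inv_mem hy⟩ : K) • x) = ((g * y * g⁻¹)⁻¹ • x) from rfl, ← hg,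
    show ((g * y * g⁻¹)⁻¹ • (QuotientGroup.mk g : G ⧸ H)) =
      QuotientGroup.mk ((g * y * g⁻¹)⁻¹ * g) from rfl, QuotientGroup.eq] at this
  convert this using 1
  group

end counting
section mainind
open scoped Classical
variable (G : Type) [Group G] [Fintype G]

noncomputable instance : Fintype (SubgroupConjClasses G) := by
  have : Finite (SubgroupConjClasses G) := by
    have : Finite (Subgroup G) := inferInstance
    exact Quotient.finite _
  exact Fintype.ofFinite _

/-- Indicator function of a conjugacy class of subgroups. -/
noncomputable def gdelta (c : SubgroupConjClasses G) : GhostRing G :=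
  fun c' => if c' = c then 1 else 0

lemma card_conj_smul (p : ConjAct G) (K : Subgroup G) :
    Nat.card ↥(p • K) = Nat.card ↥K :=
  (Nat.card_congr (Subgroup.equivSMul p K).toEquiv).symm

lemma mk_out_eq (c : SubgroupConjClasses G) :
    SubgroupConjClasses.mk (Quotient.out c) = c := Quotient.out_eq c

lemma qset_carrier (H : Subgroup G) : (qset H).carrier = (G ⧸ H) := rfl

lemma markFn_qset (H K : Subgroup G) :
    markFn (qset H) (SubgroupConjClasses.mk K)
      = (Nat.card ↥(fixedPoints K (G ⧸ H)) : ℤ) := markFn_mk _ _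

lemma gr_sub_apply (f g : GhostRing G) (x : SubgroupConjClasses G) : (f - g) x = f x - g x := rfl

lemma gr_zsmul_apply (z : ℤ) (f : GhostRing G) (x : SubgroupConjClasses G) :
    (z • f) x = z * f x := rfl

lemma gr_sum_apply {ι : Type*} (s : Finset ι) (F : ι → GhostRing G) (x : SubgroupConjClasses G) :
    (∑ i ∈ s, F i) x = ∑ i ∈ s, F i x := by
  classical
  induction s using Finset.cons_induction with
  | empty => rfl
  | cons a s ha ih =>
    rw [Finset.sum_cons, Finset.sum_cons, ← ih]
    rfl

lemma ndelta_mem (k : ℕ) : ∀ c : SubgroupConjClasses G,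
    Nat.card ↥(Quotient.out c) ≤ k →
    (Fintype.card G : ℤ) • gdelta G c ∈ (ghost G).range := by
  induction k with
  | zero =>
    intro c hc
    exact absurd (Nat.card_pos.trans_le hc) (lt_irrefl 0)
  | succ k ih =>
    intro c hc
    set H : Subgroup G := Quotient.out c with hH
    set m : GhostRing G := markFn (qset H) with hm
    have hmR : m ∈ (ghost G).range := ⟨BurnsideRing.mk (qset H), ghost_mk _⟩
    set e : ℕ := nIdx H with he
    have he0 : (e : ℤ) ≠ 0 := Int.natCast_ne_zero.mpr (nIdx_pos H).ne'
    have hdvdn : e ∣ Fintype.card G := nIdx_dvd_card H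
    have hmc : m c = (e : ℤ) := by
      conv_lhs => rw [← mk_out_eq G c]
      rw [hm, markFn_qset, ← hH, card_fp_self]
    have hdvd : ∀ c', (e : ℤ) ∣ m c' := by
      intro c'
      conv_rhs => rw [← mk_out_eq G c']
      rw [hm, markFn_qset]
      exact Int.natCast_dvd_natCast.mpr (nIdx_dvd_card_fp H _)
    have hsmall : ∀ c', c' ≠ c → m c' ≠ 0 → Nat.card ↥(Quotient.out c') ≤ k := by
      intro c' hne hnz
      rw [← mk_out_eq G c', hm, markFn_qset] at hnz
      have hpos : (fixedPoints (↥(Quotient.out c')) (G ⧸ H)).Nonempty := by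
        rw [Set.nonempty_coe_sort.symm]
        rcases isEmpty_or_nonempty ↥(fixedPoints (↥(Quotient.out c')) (G ⧸ H)) with h | h
        · exact absurd (by simp [Nat.card_of_isEmpty]) hnz
        · exact h
      obtain ⟨g, hg⟩ := subconj_of_fp_nonempty H hpos
      have hle : Nat.card ↥(Quotient.out c') ≤ Nat.card ↥H := by
        rw [← card_conj_smul G (ConjAct.toConjAct g) (Quotient.out c')]
        exact Subgroup.card_le_of_le hg
      rcases lt_or_eq_of_le hle with hlt | heq
      · omega
      · exfalso
        have heqsub : ConjAct.toConjAct g • Quotient.out c' = H :=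
          Subgroup.eq_of_le_of_card_ge hg
            (le_of_eq (by rw [card_conj_smul G (ConjAct.toConjAct g) (Quotient.out c'), heq]))
        apply hne
        rw [← mk_out_eq G c', ← mk_out_eq G c, ← hH]
        apply Quotient.sound
        exact ⟨(ConjAct.toConjAct g)⁻¹, by
          show (ConjAct.toConjAct g)⁻¹ • H = Quotient.out c'
          rw [← heqsub, inv_smul_smul]⟩
    have key : (Fintype.card G : ℤ) • gdelta G c =
        ((Fintype.card G / e : ℕ) : ℤ) • m
          - ∑ c' ∈ Finset.univ.erase c,
              (m c' / (e : ℤ)) • ((Fintype.card G : ℤ) • gdelta G c') := by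
      funext x
      obtain ⟨b, hb⟩ := hdvdn
      have hne : (Fintype.card G / e : ℕ) = b := by rw [hb]; exact Nat.mul_div_cancel_left b (nIdx_pos H)
      rw [gr_zsmul_apply, gr_sub_apply, gr_zsmul_apply, gr_sum_apply]
      simp only [gr_zsmul_apply]
      rcases eq_or_ne x c with rfl | hx
      · have hsum : ∑ c' ∈ Finset.univ.erase x,
            m c' / (e:ℤ) * ((Fintype.card G : ℤ) * gdelta G c' x) = 0 := by
          apply Finset.sum_eq_zero
          intro c' hc'
          have h0 : gdelta G c' x = 0 := by
            show (if x = c' then (1:ℤ) else 0) = 0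
            rw [if_neg (fun h => (Finset.mem_erase.mp hc').1 h.symm)]
          rw [h0, mul_zero, mul_zero]
        have hxx : gdelta G x x = 1 := by
          show (if x = x then (1:ℤ) else 0) = 1
          rw [if_pos rfl]
        rw [hsum, sub_zero, hxx, mul_one, hmc, hne, hb]
        push_cast
        ring
      · have hgx : gdelta G c x = 0 := by
          show (if x = c then (1:ℤ) else 0) = 0
          rw [if_neg hx]
        obtain ⟨a, ha⟩ := hdvd x
        have hxx : gdelta G x x = 1 := by
          show (if x = x then (1:ℤ) else 0) = 1
          rw [if_pos rfl]
        have hsum : ∑ c' ∈ Finset.univ.erase c,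
            m c' / (e:ℤ) * ((Fintype.card G : ℤ) * gdelta G c' x)
            = m x / (e:ℤ) * ((Fintype.card G : ℤ) * gdelta G x x) := by
          apply Finset.sum_eq_single_of_mem x (Finset.mem_erase.mpr ⟨hx, Finset.mem_univ x⟩)
          intro c'' _ hne''
          have h0 : gdelta G c'' x = 0 := by
            show (if x = c'' then (1:ℤ) else 0) = 0
            rw [if_neg (fun h => hne'' h.symm)]
          rw [h0, mul_zero, mul_zero]
        rw [hgx, mul_zero, hsum, hxx, mul_one, ha,
          Int.mul_ediv_cancel_left a he0, hne, hb]
        push_cast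
        ring
    rw [key]
    refine sub_mem (zsmul_mem hmR _) (Subring.sum_mem _ ?_)
    intro c' hc'
    by_cases hz : m c' = 0
    · rw [hz, Int.zero_ediv, zero_smul]
      exact zero_mem _
    · exact zsmul_mem (ih c' (hsmall c' (Finset.mem_erase.mp hc').1 hz)) _
end mainind
section finalthm
open scoped Classical
variable (G : Type) [Group G] [Fintype G]

lemma nsmul_mem_range (f : GhostRing G) :
    (Fintype.card G : ℤ) • f ∈ (ghost G).range := by
  have hdec : f = ∑ c : SubgroupConjClasses G, f c • gdelta G c := by
    funext x
    rw [gr_sum_apply]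
    have : ∀ c, (f c • gdelta G c) x = if x = c then f c else 0 := by
      intro c
      rw [gr_zsmul_apply]
      show f c * (if x = c then 1 else 0) = if x = c then f c else 0
      by_cases h : x = c <;> simp [h]
    simp only [this]
    rw [Finset.sum_ite_eq (Finset.univ) x f]
    simp
  have : (Fintype.card G : ℤ) • f
      = ∑ c : SubgroupConjClasses G, f c • ((Fintype.card G : ℤ) • gdelta G c) := by
    conv_lhs => rw [hdec]
    rw [Finset.smul_sum]
    congr 1
    funext c
    rw [smul_comm]
  rw [this]
  exact Subring.sum_mem _ (fun c _ =>
    zsmul_mem (ndelta_mem G (Nat.card ↥(Quotient.out c)) c le_rfl) _)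

lemma nsmul_mem_range' (f : GhostRing G) :
    (Fintype.card G) • f ∈ Set.range ⇑(ghost G) := by
  have h := nsmul_mem_range G f
  obtain ⟨y, hy⟩ := h
  exact ⟨y, hy.trans (natCast_zsmul ..)⟩

theorem ghostMap_cokernel' :
    ∃ Φ : BurnsideRing G →+* GhostRing G,
      (∀ S : FinGSet G, HasMarksOf (Φ (BurnsideRing.mk S)) S) ∧
      (∀ f : GhostRing G, (Fintype.card G) • f ∈ Set.range Φ) ∧
      Finite (GhostRing G ⧸ (Φ.toAddMonoidHom.range)) := by
  refine ⟨ghost G, fun S => by rw [ghost_mk]; exact markFn_hasMarks S, nsmul_mem_range' G, ?_⟩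
  haveI : NeZero (Fintype.card G) := ⟨Fintype.card_ne_zero⟩
  set n := Fintype.card G with hn
  let ψ : GhostRing G →+ (SubgroupConjClasses G → ZMod n) :=
    { toFun := fun f c => ((f c : ℤ) : ZMod n)
      map_zero' := by funext c; show ((0:ℤ):ZMod n) = 0; simp
      map_add' := by
        intro a b
        funext c
        show (((a + b) c : ℤ) : ZMod n) = ((a c : ℤ) : ZMod n) + ((b c : ℤ) : ZMod n)
        show (((a c + b c) : ℤ) : ZMod n) = _
        push_cast
        ring }
  have hψsurj : Function.Surjective ψ := by
    intro u
    refine ⟨fun c => ((u c).val : ℤ), ?_⟩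
    funext c
    show ((((u c).val : ℤ)) : ZMod n) = u c
    push_cast
    simp [ZMod.natCast_val, ZMod.cast_id]
  set R := (ghost G).toAddMonoidHom.range with hR
  have hker : ∀ f : GhostRing G, ψ f = 0 → f ∈ R := by
    intro f hf
    have hdvd : ∀ c, (n : ℤ) ∣ f c := by
      intro c
      have : ((f c : ℤ) : ZMod n) = 0 := congrFun hf c
      exact (ZMod.intCast_zmod_eq_zero_iff_dvd _ _).mp this
    have : f = (n : ℤ) • (fun c => f c / (n : ℤ)) := by
      funext c
      show f c = (n : ℤ) * (f c / (n : ℤ))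
      exact (Int.mul_ediv_cancel' (hdvd c)).symm
    rw [this]
    obtain ⟨y, hy⟩ := nsmul_mem_range G (fun c => f c / (n : ℤ))
    exact ⟨y, hy⟩
  let s := Function.surjInv hψsurj
  have hsurj : Function.Surjective ((QuotientAddGroup.mk' R) ∘ s) := by
    intro q
    obtain ⟨f, rfl⟩ := QuotientAddGroup.mk'_surjective R q
    refine ⟨ψ f, ?_⟩
    show QuotientAddGroup.mk' R (s (ψ f)) = QuotientAddGroup.mk' R f
    rw [QuotientAddGroup.mk'_eq_mk']
    refine ⟨f - s (ψ f), ?_, by abel⟩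
    apply hker
    have : ψ (s (ψ f)) = ψ f := Function.surjInv_eq hψsurj (ψ f)
    rw [map_sub, this, sub_self]
  exact Finite.of_surjective _ hsurj

end finalthm

/-- n·C(G) ⊆ Φ(A(G)) ⊆ C(G) for n = |G|; the cokernel of Φ is finite. -/
theorem ghostMap_cokernel (G : Type) [Group G] [Fintype G] :
    ∃ Φ : BurnsideRing G →+* GhostRing G,
      (∀ S : FinGSet G, HasMarksOf (Φ (BurnsideRing.mk S)) S) ∧
      (∀ f : GhostRing G, (Fintype.card G) • f ∈ Set.range Φ) ∧
      Finite (GhostRing G ⧸ (Φ.toAddMonoidHom.range)) := by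
  exact ghostMap_cokernel' G
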